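/- Let A be a weakly noetherian B₁-algebra. Then an ideal P of A is a minimal prime ideal of A (prime and minimal among all prime ideals) if and only if P is saturated, prime, and minimal with respect to inclusion among all saturated prime ideals of A. -/

import Mathlib

/-- An ideal `I` of a `B₁`-algebra is *saturated* if `y ∈ I` and `x + y = y` imply `x ∈ I`. -/
def IsSaturated {A : Type*} [CommSemiring A] (I : Ideal A) : Prop :=
  ∀ x y : A, y ∈ I → x + y = y → x ∈ I

/-- `A` is *weakly noetherian* if every ascending chain of saturated ideals is eventually
stationary. -/
def WeaklyNoetherian (A : Type*) [CommSemiring A] : Prop :=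
  ∀ f : ℕ → Ideal A, (∀ n, IsSaturated (f n)) → (∀ n, f n ≤ f (n + 1)) →
    ∃ N, ∀ n, N ≤ n → f n = f N

/-- The saturation of an ideal. -/
def saturation {A : Type*} [CommSemiring A] (I : Ideal A) : Ideal A where
  carrier := {x | ∃ y ∈ I, x + y = y}
  zero_mem' := ⟨0, I.zero_mem, by rw [add_zero]⟩
  add_mem' := by
    rintro a b ⟨y, hy, hay⟩ ⟨z, hz, hbz⟩
    exact ⟨y + z, I.add_mem hy hz, by
      calc a + b + (y + z) = (a + y) + (b + z) := by ring
      _ = y + z := by rw [hay, hbz]⟩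
  smul_mem' := by
    rintro r a ⟨y, hy, hay⟩
    exact ⟨r * y, I.mul_mem_left r hy, by
      simp only [smul_eq_mul]
      rw [← mul_add, hay]⟩

lemma le_saturation {A : Type*} [CommSemiring A] (hchar : (1 : A) + 1 = 1) (I : Ideal A) :
    I ≤ saturation I := by
  intro x hx
  refine ⟨x, hx, ?_⟩
  calc x + x = (1 + 1) * x := by ring
  _ = x := by rw [hchar, one_mul]

lemma saturation_isSaturated {A : Type*} [CommSemiring A] (I : Ideal A) :
    IsSaturated (saturation I) := by
  rintro x y ⟨z, hz, hyz⟩ hxy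
  exact ⟨z, hz, by rw [← hyz, ← add_assoc, hxy]⟩

/-- Every prime ideal contains a saturated prime ideal. -/
lemma exists_saturated_prime_le {A : Type*} [CommSemiring A] (hchar : (1 : A) + 1 = 1)
    (P : Ideal A) (hP : P.IsPrime) :
    ∃ Q : Ideal A, IsSaturated Q ∧ Q.IsPrime ∧ Q ≤ P := by
  have idem : ∀ a : A, a + a = a := by
    intro a
    calc a + a = (1 + 1) * a := by ring
    _ = a := by rw [hchar, one_mul]
  -- The zero ideal is saturated
  have hbot : IsSaturated (⊥ : Ideal A) := by
    intro x y hy hxy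
    simp only [Ideal.mem_bot] at hy ⊢
    rw [hy, add_zero] at hxy
    exact hxy
  obtain ⟨Q, -, hQmem, hQmax⟩ := zorn_le_nonempty₀
      {I : Ideal A | IsSaturated I ∧ I ≤ P}
      (fun c hc hchain y hy => by
        refine ⟨sSup c, ⟨?_, ?_⟩, fun z hz => le_sSup hz⟩
        · intro x w hw hxw
          obtain ⟨J, hJc, hwJ⟩ :=
            (Submodule.mem_sSup_of_directed ⟨y, hy⟩ hchain.directedOn).1 hw
          exact (le_refl (sSup c) : sSup c ≤ sSup c)
            (le_sSup hJc ((hc hJc).1 x w hwJ hxw))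
        · exact sSup_le fun J hJ => (hc hJ).2)
      ⊥ ⟨hbot, bot_le⟩
  obtain ⟨hQsat, hQP⟩ := hQmem
  refine ⟨Q, hQsat, ⟨?_, ?_⟩, hQP⟩
  · intro h
    exact hP.ne_top (top_le_iff.1 (h ▸ hQP))
  · intro a b hab
    by_contra hcon
    push_neg at hcon
    obtain ⟨ha, hb⟩ := hcon
    -- saturation of Q ⊔ span {a} is a saturated ideal strictly containing Q, so not ≤ P
    have key : ∀ x : A, x ∉ Q → ∃ s, s ∉ P ∧ ∃ y ∈ Q ⊔ Ideal.span {x}, s + y = y := by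
      intro x hx
      have hQle : Q ≤ saturation (Q ⊔ Ideal.span {x}) :=
        le_trans le_sup_left (le_saturation hchar _)
      have hne : saturation (Q ⊔ Ideal.span {x}) ≠ Q := by
        intro h
        exact hx (h ▸ (le_trans le_sup_right (le_saturation hchar _))
          (Ideal.subset_span (Set.mem_singleton x)))
      have : ¬ (saturation (Q ⊔ Ideal.span {x}) ≤ P) := by
        intro hle
        exact hne (le_antisymm (hQmax ⟨saturation_isSaturated _, hle⟩ hQle) hQle)
      obtain ⟨s, hs, hsP⟩ := Set.not_subset.1 this
      exact ⟨s, hsP, hs⟩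
    obtain ⟨s, hsP, y, hy, hsy⟩ := key a ha
    obtain ⟨t, htP, z, hz, htz⟩ := key b hb
    -- yz ∈ Q
    have hyz : y * z ∈ Q := by
      rw [Submodule.mem_sup] at hy hz
      obtain ⟨q, hq, ra, hra, rfl⟩ := hy
      obtain ⟨q', hq', rb, hrb, rfl⟩ := hz
      rw [Ideal.mem_span_singleton] at hra hrb
      obtain ⟨r, rfl⟩ := hra
      obtain ⟨r', rfl⟩ := hrb
      have : (q + a * r) * (q' + b * r') =
          q * q' + q * (b * r') + q' * (a * r) + (a * b) * (r * r') := by ring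
      rw [this]
      exact Q.add_mem (Q.add_mem (Q.add_mem (Q.mul_mem_right _ hq) (Q.mul_mem_right _ hq))
        (Q.mul_mem_right _ hq')) (Q.mul_mem_right _ hab)
    -- st + yz = yz
    have expand : y * z = s * t + (s * z + y * t + y * z) := by
      calc y * z = (s + y) * (t + z) := by rw [hsy, htz]
      _ = s * t + (s * z + y * t + y * z) := by ring
    have hst : s * t + y * z = y * z := by
      conv_lhs => rw [expand]
      rw [← add_assoc, idem (s * t)]
      exact expand.symm
    have : s * t ∈ Q := hQsat (s * t) (y * z) hyz hst
    rcases hP.mem_or_mem (hQP this) with h | h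
    · exact hsP h
    · exact htP h

/-- In a weakly noetherian `B₁`-algebra, an ideal is a minimal prime ideal if and only if it is
saturated, prime, and minimal among saturated prime ideals. -/
theorem minPrime_iff_minSaturatedPrime {A : Type*} [CommSemiring A]
    (hchar : (1 : A) + 1 = 1) (hwn : WeaklyNoetherian A) (P : Ideal A) :
    (P.IsPrime ∧ ∀ Q : Ideal A, Q.IsPrime → Q ≤ P → Q = P) ↔
      (IsSaturated P ∧ P.IsPrime ∧
        ∀ Q : Ideal A, IsSaturated Q → Q.IsPrime → Q ≤ P → Q = P) := by
  constructor
  · rintro ⟨hP, hmin⟩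
    obtain ⟨Q, hQsat, hQprime, hQle⟩ := exists_saturated_prime_le hchar P hP
    have hQP : Q = P := hmin Q hQprime hQle
    exact ⟨hQP ▸ hQsat, hP, fun R _ hRp hRle => hmin R hRp hRle⟩
  · rintro ⟨hPsat, hP, hmin⟩
    refine ⟨hP, fun Q hQ hQP => ?_⟩
    obtain ⟨R, hRsat, hRprime, hRle⟩ := exists_saturated_prime_le hchar Q hQ
    have hRP : R = P := hmin R hRsat hRprime (hRle.trans hQP)
    exact le_antisymm hQP (hRP ▸ hRle)
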